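/- For all n ≥ 0 and all a, b, v: ∑_{κ=0}^{n} [n choose κ]_q a^κ (b +· v)^{n-κ} = ∑_{κ=0}^{n} [n choose κ]_q b^κ (a +· v)^{n-κ}, where (x +· y)^m = ∏_{i=0}^{m-1}(x + q^i y). -/
import Mathlib


/-- The `q`-analog `[n]_q = 1 + q + ⋯ + q^(n-1)` of a natural number. -/
def qNum {R : Type*} [CommRing R] (q : R) (n : ℕ) : R := ∑ i ∈ Finset.range n, q ^ i

/-- The `q`-factorial `[n]! = [1][2]⋯[n]`. -/
def qFact {R : Type*} [CommRing R] (q : R) (n : ℕ) : R := ∏ i ∈ Finset.range n, qNum q (i + 1)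

/-- The Gaussian (`q`-)binomial coefficient, via the `q`-Pascal recursion. -/
def qBinom {R : Type*} [CommRing R] (q : R) : ℕ → ℕ → R
  | _, 0 => 1
  | 0, _ + 1 => 0
  | n + 1, k + 1 => qBinom q n k + q ^ (k + 1) * qBinom q n (k + 1)

/-- The `q`-shifted product `(1 −· p)^m = ∏_{i=0}^{m-1} (1 - p q^i)`. -/
def qProdSub {R : Type*} [CommRing R] (q p : R) (m : ℕ) : R :=
  ∏ i ∈ Finset.range m, (1 - p * q ^ i)

/-- The `q`-shifted power `(x +· y)^m = ∏_{i=0}^{m-1} (x + q^i y)`. -/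
def qProdAdd {R : Type*} [CommRing R] (q x y : R) (m : ℕ) : R :=
  ∏ i ∈ Finset.range m, (x + q ^ i * y)

section Aux

variable {R : Type*} [CommRing R]

lemma qBinom_zero_right (q : R) (n : ℕ) : qBinom q n 0 = 1 := by
  cases n <;> rfl

lemma qBinom_eq_zero (q : R) : ∀ n k : ℕ, n < k → qBinom q n k = 0 := by
  intro n
  induction n with
  | zero =>
    intro k hk
    cases k with
    | zero => omega
    | succ j => rfl
  | succ n ih =>
    intro k hk
    cases k with
    | zero => omega
    | succ j =>
      have h1 : qBinom q (n+1) (j+1) = qBinom q n j + q ^ (j+1) * qBinom q n (j+1) := rfl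
      rw [h1, ih j (by omega), ih (j+1) (by omega)]
      ring

lemma qBinom_pascal (q : R) (n k : ℕ) :
    qBinom q (n+1) (k+1) = qBinom q n k + q ^ (k+1) * qBinom q n (k+1) := rfl

lemma qBinom_pascal' (q : R) : ∀ n k : ℕ, k ≤ n →
    qBinom q (n+1) (k+1) = q ^ (n-k) * qBinom q n k + qBinom q n (k+1) := by
  intro n
  induction n with
  | zero =>
    intro k hk
    interval_cases k
    simp [qBinom_pascal, qBinom_zero_right, qBinom_eq_zero q 0 1 (by omega)]
  | succ n ih =>
    intro k hk
    rcases Nat.lt_or_ge k (n+1) with h | h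
    · have hk' : k ≤ n := by omega
      cases k with
      | zero =>
        have A : qBinom q (n+1+1) (0+1)
            = qBinom q (n+1) 0 + q ^ (0+1) * qBinom q (n+1) (0+1) := qBinom_pascal _ _ _
        have B := ih 0 (Nat.zero_le _)
        have C : qBinom q (n+1) (0+1)
            = qBinom q n 0 + q ^ (0+1) * qBinom q n (0+1) := qBinom_pascal _ _ _
        have D : qBinom q (n+1) 0 = 1 := qBinom_zero_right _ _
        have E : qBinom q n 0 = 1 := qBinom_zero_right _ _
        rw [Nat.sub_zero] at B ⊢
        linear_combination A + q * B - C + (1 - q ^ (n+1)) * (D - E)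
      | succ j =>
        have hj : j ≤ n := by omega
        have hj1 : j + 1 ≤ n := by omega
        obtain ⟨d, hd⟩ : ∃ d, d = n - (j+1) := ⟨_, rfl⟩
        have h1 : n - j = d + 1 := by omega
        have h2 : n + 1 - (j+1) = d + 1 := by omega
        have A : qBinom q (n+1+1) (j+1+1)
            = qBinom q (n+1) (j+1) + q ^ (j+1+1) * qBinom q (n+1) (j+1+1) := qBinom_pascal _ _ _
        have B := ih j hj
        rw [h1] at B
        have C := ih (j+1) hj1
        rw [← hd] at C
        have Dd : qBinom q (n+1) (j+1)
            = qBinom q n j + q ^ (j+1) * qBinom q n (j+1) := qBinom_pascal _ _ _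
        have E : qBinom q (n+1) (j+1+1)
            = qBinom q n (j+1) + q ^ (j+1+1) * qBinom q n (j+1+1) := qBinom_pascal _ _ _
        rw [h2]
        linear_combination A + B - q ^ (d+1) * Dd + q ^ (j+2) * C - E
    · have hkn : k = n + 1 := by omega
      subst hkn
      rw [qBinom_pascal, qBinom_eq_zero q (n+1) (n+1+1) (by omega), Nat.sub_self]
      ring

lemma qProdAdd_succ (q x y : R) (m : ℕ) :
    qProdAdd q x y (m+1) = qProdAdd q x y m * (x + q ^ m * y) :=
  Finset.prod_range_succ _ _

lemma qProdAdd_succ' (q x y : R) (m : ℕ) :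
    qProdAdd q x y (m+1) = (x + y) * qProdAdd q x (q*y) m := by
  rw [qProdAdd, Finset.prod_range_succ', pow_zero, one_mul, mul_comm]
  congr 1
  refine Finset.prod_congr rfl fun i _ => ?_
  rw [pow_succ]
  ring

lemma pow_mul_qProdAdd (q x y : R) (m : ℕ) :
    q ^ m * qProdAdd q x y m = qProdAdd q (q*x) (q*y) m := by
  unfold qProdAdd
  rw [show (q:R) ^ m = ∏ _i ∈ Finset.range m, q by simp, ← Finset.prod_mul_distrib]
  exact Finset.prod_congr rfl fun i _ => by ring

/-- First recursion for the sum. -/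
lemma sum_rel1 (q a b v : R) (n : ℕ) :
    ∑ κ ∈ Finset.range (n + 1 + 1), qBinom q (n+1) κ * a ^ κ * qProdAdd q b v (n + 1 - κ) =
      a * ∑ κ ∈ Finset.range (n + 1), qBinom q n κ * a ^ κ * qProdAdd q b v (n - κ)
      + (b + v) * ∑ κ ∈ Finset.range (n + 1),
          qBinom q n κ * (q*a) ^ κ * qProdAdd q b (q*v) (n - κ) := by
  rw [Finset.sum_range_succ']
  have key : ∀ κ ∈ Finset.range (n+1),
      qBinom q (n+1) (κ+1) * a ^ (κ+1) * qProdAdd q b v (n + 1 - (κ+1)) =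
        a * (qBinom q n κ * a ^ κ * qProdAdd q b v (n - κ))
        + q ^ (κ+1) * qBinom q n (κ+1) * a ^ (κ+1) * qProdAdd q b v (n - κ) := by
    intro κ _
    rw [qBinom_pascal, Nat.succ_sub_succ]
    ring
  rw [Finset.sum_congr rfl key, Finset.sum_add_distrib, ← Finset.mul_sum]
  -- now handle the second piece plus the κ = 0 term
  have e2 : (∑ κ ∈ Finset.range (n+1),
        q ^ (κ+1) * qBinom q n (κ+1) * a ^ (κ+1) * qProdAdd q b v (n - κ))
      + qBinom q (n+1) 0 * a ^ 0 * qProdAdd q b v (n + 1 - 0) =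
      (b + v) * ∑ κ ∈ Finset.range (n + 1),
          qBinom q n κ * (q*a) ^ κ * qProdAdd q b (q*v) (n - κ) := by
    rw [Finset.mul_sum]
    have rhs_eq : ∀ κ ∈ Finset.range (n+1),
        (b + v) * (qBinom q n κ * (q*a) ^ κ * qProdAdd q b (q*v) (n - κ)) =
          qBinom q n κ * (q*a) ^ κ * qProdAdd q b v (n - κ + 1) := by
      intro κ _
      rw [qProdAdd_succ']
      ring
    rw [Finset.sum_congr rfl rhs_eq]
    conv_rhs => rw [Finset.sum_range_succ']
    have hterm : ∀ κ ∈ Finset.range n,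
        qBinom q n (κ+1) * (q*a) ^ (κ+1) * qProdAdd q b v (n - (κ+1) + 1) =
          q ^ (κ+1) * qBinom q n (κ+1) * a ^ (κ+1) * qProdAdd q b v (n - κ) := by
      intro κ hκ
      have : n - (κ+1) + 1 = n - κ := by
        have := Finset.mem_range.mp hκ; omega
      rw [this, mul_pow]
      ring
    rw [Finset.sum_congr rfl hterm]
    conv_lhs => rw [Finset.sum_range_succ]
    rw [qBinom_eq_zero q n (n+1) (by omega), qBinom_zero_right, qBinom_zero_right]
    simp
  linear_combination e2

/-- Second recursion for the sum, via the dual Pascal rule. -/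
lemma sum_rel2 (q a b v : R) (n : ℕ) :
    ∑ κ ∈ Finset.range (n + 1 + 1), qBinom q (n+1) κ * a ^ κ * qProdAdd q b v (n + 1 - κ) =
      b * ∑ κ ∈ Finset.range (n + 1), qBinom q n κ * a ^ κ * qProdAdd q b v (n - κ)
      + (a + v) * ∑ κ ∈ Finset.range (n + 1),
          qBinom q n κ * a ^ κ * qProdAdd q (q*b) (q*v) (n - κ) := by
  rw [Finset.sum_range_succ']
  have key : ∀ κ ∈ Finset.range (n+1),
      qBinom q (n+1) (κ+1) * a ^ (κ+1) * qProdAdd q b v (n + 1 - (κ+1)) =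
        a * (qBinom q n κ * a ^ κ * (q ^ (n-κ) * qProdAdd q b v (n - κ)))
        + qBinom q n (κ+1) * a ^ (κ+1) * qProdAdd q b v (n - κ) := by
    intro κ hκ
    rw [qBinom_pascal' q n κ (by have := Finset.mem_range.mp hκ; omega), Nat.succ_sub_succ]
    ring
  rw [Finset.sum_congr rfl key, Finset.sum_add_distrib, ← Finset.mul_sum]
  have eA : (∑ κ ∈ Finset.range (n+1),
        qBinom q n κ * a ^ κ * (q ^ (n-κ) * qProdAdd q b v (n - κ))) =
      ∑ κ ∈ Finset.range (n+1), qBinom q n κ * a ^ κ * qProdAdd q (q*b) (q*v) (n - κ) := by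
    refine Finset.sum_congr rfl fun κ _ => ?_
    rw [pow_mul_qProdAdd]
  have eB : (∑ κ ∈ Finset.range (n+1),
        qBinom q n (κ+1) * a ^ (κ+1) * qProdAdd q b v (n - κ))
      + qBinom q (n+1) 0 * a ^ 0 * qProdAdd q b v (n + 1 - 0) =
      b * (∑ κ ∈ Finset.range (n+1), qBinom q n κ * a ^ κ * qProdAdd q b v (n - κ))
      + v * ∑ κ ∈ Finset.range (n+1),
          qBinom q n κ * a ^ κ * qProdAdd q (q*b) (q*v) (n - κ) := by
    rw [Finset.mul_sum, Finset.mul_sum, ← Finset.sum_add_distrib]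
    have rhs_eq : ∀ κ ∈ Finset.range (n+1),
        b * (qBinom q n κ * a ^ κ * qProdAdd q b v (n - κ))
          + v * (qBinom q n κ * a ^ κ * qProdAdd q (q*b) (q*v) (n - κ)) =
          qBinom q n κ * a ^ κ * qProdAdd q b v (n - κ + 1) := by
      intro κ _
      rw [qProdAdd_succ, ← pow_mul_qProdAdd]
      ring
    rw [Finset.sum_congr rfl rhs_eq]
    conv_rhs => rw [Finset.sum_range_succ']
    have hterm : ∀ κ ∈ Finset.range n,
        qBinom q n (κ+1) * a ^ (κ+1) * qProdAdd q b v (n - (κ+1) + 1) =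
          qBinom q n (κ+1) * a ^ (κ+1) * qProdAdd q b v (n - κ) := by
      intro κ hκ
      have : n - (κ+1) + 1 = n - κ := by
        have := Finset.mem_range.mp hκ; omega
      rw [this]
    rw [Finset.sum_congr rfl hterm]
    conv_lhs => rw [Finset.sum_range_succ]
    rw [qBinom_eq_zero q n (n+1) (by omega), qBinom_zero_right, qBinom_zero_right]
    simp
  rw [eA]
  linear_combination eB

end Aux

/-- Symmetry identity (2.10):
`∑ [n choose κ] a^κ (b +· v)^{n-κ} = ∑ [n choose κ] b^κ (a +· v)^{n-κ}`. -/
theorem qBinom_sum_symm {R : Type*} [CommRing R] (q a b v : R) (n : ℕ) :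
    ∑ κ ∈ Finset.range (n + 1), qBinom q n κ * a ^ κ * qProdAdd q b v (n - κ) =
      ∑ κ ∈ Finset.range (n + 1), qBinom q n κ * b ^ κ * qProdAdd q a v (n - κ) := by
  induction n generalizing a b v with
  | zero => simp [qProdAdd]
  | succ n ih =>
    rw [sum_rel2 q a b v n, sum_rel1 q b a v n, ih b a v, ih a (q*b) (q*v)]
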